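/- Let D be an oriented knot diagram with n ≥ 1 crossings, modeled by a Gauss code g. Then the sum over all crossings c of t^(d (u c)) (the sum of t^(d e) over all edges e whose terminal endpoint is an under-crossing) equals t · X_D(t) in ℤ[t]. -/
import Mathlib


open Polynomial Finset

/-- An oriented knot diagram with `n` crossings, modeled by its oriented Gauss code. -/
structure GaussCode (n : ℕ) where
  g : ZMod (2 * n) → Fin n × Bool
  o : Fin n → ZMod (2 * n)
  u : Fin n → ZMod (2 * n)
  over_iff : ∀ (c : Fin n) (e : ZMod (2 * n)), g e = (c, true) ↔ e = o c
  under_iff : ∀ (c : Fin n) (e : ZMod (2 * n)), g e = (c, false) ↔ e = u c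

namespace GaussCode

variable {n : ℕ}

/-- The warping degree of the base position `e`: the number of crossings whose
under-passage occurs strictly before its over-passage when traversing the diagram
starting at `e`. -/
def d (D : GaussCode n) (e : ZMod (2 * n)) : ℕ :=
  (Finset.univ.filter fun c : Fin n => (D.u c - e).val < (D.o c - e).val).card

/-- The warping crossing polynomial. -/
noncomputable def Xpoly (D : GaussCode n) : Polynomial ℤ :=
  ∑ c : Fin n, Polynomial.X ^ D.d (D.o c)

/-- The warping polynomial. -/
noncomputable def Wpoly (D : GaussCode n) : Polynomial ℤ :=
  ∑ k ∈ Finset.range (2 * n), Polynomial.X ^ D.d (k : ZMod (2 * n))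

/-- The warping degree of the diagram: minimum over all base positions. -/
noncomputable def wdeg (D : GaussCode n) : ℕ :=
  sInf (Set.range fun e : ZMod (2 * n) => D.d e)

/-- The diagram is alternating. -/
def Alternating (D : GaussCode n) : Prop :=
  ∀ e : ZMod (2 * n), (D.g e).2 ≠ (D.g (e + 1)).2

end GaussCode

section Aux

variable {n : ℕ}

private lemma aux_val_sub_one {m : ℕ} [NeZero m] (x : ZMod m) (hx : x ≠ 0) :
    (x - 1).val = x.val - 1 := by
  have h1 : 1 ≤ x.val := Nat.one_le_iff_ne_zero.2 (fun h => hx ((ZMod.val_eq_zero x).1 h))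
  have h2 : x.val < m := ZMod.val_lt x
  have : x - 1 = ((x.val - 1 : ℕ) : ZMod m) := by
    push_cast [Nat.cast_sub h1]
    rw [ZMod.natCast_val, ZMod.cast_id]
  rw [this, ZMod.val_cast_of_lt (by omega)]

private lemma aux_val_neg_one {m : ℕ} [NeZero m] : ((-1 : ZMod m)).val = m - 1 := by
  have hm : 1 ≤ m := Nat.one_le_iff_ne_zero.2 (NeZero.ne m)
  have : (-1 : ZMod m) = ((m - 1 : ℕ) : ZMod m) := by
    push_cast [Nat.cast_sub hm]
    simp
  rw [this, ZMod.val_cast_of_lt (by omega)]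

namespace GaussCode

lemma g_o (D : GaussCode n) (c : Fin n) : D.g (D.o c) = (c, true) :=
  (D.over_iff c (D.o c)).2 rfl

lemma g_u (D : GaussCode n) (c : Fin n) : D.g (D.u c) = (c, false) :=
  (D.under_iff c (D.u c)).2 rfl

lemma o_ne_u (D : GaussCode n) (c c' : Fin n) : D.o c ≠ D.u c' := by
  intro h
  have := (D.g_o c).symm.trans (h ▸ D.g_u c')
  simp at this

lemma o_inj (D : GaussCode n) : Function.Injective D.o := by
  intro a b h
  have h1 := D.g_o a
  rw [h, D.g_o b] at h1
  exact (Prod.mk.injEq _ _ _ _ ▸ h1).1.symm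

lemma u_inj (D : GaussCode n) : Function.Injective D.u := by
  intro a b h
  have h1 := D.g_u a
  rw [h, D.g_u b] at h1
  exact (Prod.mk.injEq _ _ _ _ ▸ h1).1.symm

/-- Splitting a sum over all positions into over and under positions. -/
lemma sum_split (hn : 1 ≤ n) (D : GaussCode n) [NeZero (2 * n)] {M : Type*} [AddCommMonoid M]
    (f : ZMod (2 * n) → M) :
    ∑ e : ZMod (2 * n), f e = (∑ c : Fin n, f (D.o c)) + ∑ c : Fin n, f (D.u c) := by
  have hbij : Function.Bijective (Sum.elim D.o D.u) := by
    rw [Fintype.bijective_iff_injective_and_card]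
    constructor
    · rintro (a | a) (b | b) h
      · exact congrArg Sum.inl (D.o_inj h)
      · exact absurd h (D.o_ne_u a b)
      · exact absurd h.symm (D.o_ne_u b a)
      · exact congrArg Sum.inr (D.u_inj h)
    · simp [ZMod.card, two_mul]
  rw [← Fintype.sum_bijective _ hbij (fun x => f (Sum.elim D.o D.u x)) f (fun x => rfl)]
  rw [Fintype.sum_sum_type]
  rfl

/-- Shifting the base point over an over-passage increases the warping degree by one. -/
lemma d_o_succ (hn : 1 ≤ n) (D : GaussCode n) (c₀ : Fin n) :
    D.d (D.o c₀ + 1) = D.d (D.o c₀) + 1 := by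
  haveI : NeZero (2 * n) := ⟨by omega⟩
  set e := D.o c₀ with he
  unfold d
  have hkey : (Finset.univ.filter fun c : Fin n => (D.u c - (e + 1)).val < (D.o c - (e + 1)).val)
      = insert c₀ (Finset.univ.filter fun c : Fin n => (D.u c - e).val < (D.o c - e).val) := by
    ext c
    simp only [Finset.mem_insert, Finset.mem_filter, Finset.mem_univ, true_and]
    by_cases hc : c = c₀
    · subst hc
      have hu : D.u c - e ≠ 0 := by
        intro h; exact D.o_ne_u c c (sub_eq_zero.mp h).symm
      have h1 : (D.u c - (e + 1)) = (D.u c - e) - 1 := by ring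
      have h2 : (D.o c - (e + 1)) = -1 := by rw [← he]; ring
      rw [h1, h2, aux_val_sub_one _ hu, aux_val_neg_one]
      have := ZMod.val_lt (D.u c - e)
      have hv1 : 1 ≤ (D.u c - e).val := Nat.one_le_iff_ne_zero.2
        (fun h => hu ((ZMod.val_eq_zero _).1 h))
      simp only [eq_self_iff_true, true_or, iff_true]
      omega
    · have hu : D.u c - e ≠ 0 := by
        intro h; exact D.o_ne_u c₀ c (sub_eq_zero.mp h).symm
      have ho : D.o c - e ≠ 0 := by
        intro h
        exact hc (D.o_inj (sub_eq_zero.mp h))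
      have h1 : (D.u c - (e + 1)) = (D.u c - e) - 1 := by ring
      have h2 : (D.o c - (e + 1)) = (D.o c - e) - 1 := by ring
      rw [h1, h2, aux_val_sub_one _ hu, aux_val_sub_one _ ho]
      have hv1 : 1 ≤ (D.u c - e).val := Nat.one_le_iff_ne_zero.2
        (fun h => hu ((ZMod.val_eq_zero _).1 h))
      have hv2 : 1 ≤ (D.o c - e).val := Nat.one_le_iff_ne_zero.2
        (fun h => ho ((ZMod.val_eq_zero _).1 h))
      constructor
      · intro h; exact Or.inr (by omega)
      · rintro (h | h)
        · exact absurd h hc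
        · omega
  have hnotmem : c₀ ∉ (Finset.univ.filter fun c : Fin n => (D.u c - e).val < (D.o c - e).val) := by
    simp only [Finset.mem_filter, Finset.mem_univ, true_and, not_lt, ← he]
    simp
  rw [hkey, Finset.card_insert_of_notMem hnotmem]

/-- Shifting the base point over an under-passage decreases the warping degree by one. -/
lemma d_u_succ (hn : 1 ≤ n) (D : GaussCode n) (c₀ : Fin n) :
    D.d (D.u c₀ + 1) + 1 = D.d (D.u c₀) := by
  haveI : NeZero (2 * n) := ⟨by omega⟩
  set e := D.u c₀ with he
  unfold d
  have hkey : (Finset.univ.filter fun c : Fin n => (D.u c - e).val < (D.o c - e).val)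
      = insert c₀ (Finset.univ.filter fun c : Fin n =>
          (D.u c - (e + 1)).val < (D.o c - (e + 1)).val) := by
    ext c
    simp only [Finset.mem_insert, Finset.mem_filter, Finset.mem_univ, true_and]
    by_cases hc : c = c₀
    · subst hc
      have ho : D.o c - e ≠ 0 := by
        intro h; exact D.o_ne_u c c (sub_eq_zero.mp h)
      have h1 : (D.u c - (e + 1)) = -1 := by rw [← he]; ring
      have h2 : (D.o c - (e + 1)) = (D.o c - e) - 1 := by ring
      have h3 : (D.u c - e) = 0 := by rw [← he]; ring
      rw [h1, h2, h3, aux_val_sub_one _ ho, aux_val_neg_one]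
      have := ZMod.val_lt (D.o c - e)
      have hv1 : 1 ≤ (D.o c - e).val := Nat.one_le_iff_ne_zero.2
        (fun h => ho ((ZMod.val_eq_zero _).1 h))
      simp only [ZMod.val_zero, eq_self_iff_true, true_or, iff_true]
      omega
    · have hu : D.u c - e ≠ 0 := by
        intro h
        exact hc (D.u_inj (sub_eq_zero.mp h))
      have ho : D.o c - e ≠ 0 := by
        intro h; exact D.o_ne_u c c₀ (sub_eq_zero.mp h)
      have h1 : (D.u c - (e + 1)) = (D.u c - e) - 1 := by ring
      have h2 : (D.o c - (e + 1)) = (D.o c - e) - 1 := by ring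
      rw [h1, h2, aux_val_sub_one _ hu, aux_val_sub_one _ ho]
      have hv1 : 1 ≤ (D.u c - e).val := Nat.one_le_iff_ne_zero.2
        (fun h => hu ((ZMod.val_eq_zero _).1 h))
      have hv2 : 1 ≤ (D.o c - e).val := Nat.one_le_iff_ne_zero.2
        (fun h => ho ((ZMod.val_eq_zero _).1 h))
      constructor
      · rintro h; exact Or.inr (by omega)
      · rintro (h | h)
        · exact absurd h hc
        · omega
  have hnotmem : c₀ ∉ (Finset.univ.filter fun c : Fin n =>
      (D.u c - (e + 1)).val < (D.o c - (e + 1)).val) := by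
    simp only [Finset.mem_filter, Finset.mem_univ, true_and, not_lt]
    have h1 : (D.u c₀ - (e + 1)) = -1 := by rw [← he]; ring
    have ho : D.o c₀ - e ≠ 0 := by
      intro h; exact D.o_ne_u c₀ c₀ (sub_eq_zero.mp h)
    have h2 : (D.o c₀ - (e + 1)) = (D.o c₀ - e) - 1 := by ring
    rw [h1, h2, aux_val_sub_one _ ho, aux_val_neg_one]
    have := ZMod.val_lt (D.o c₀ - e)
    omega
  rw [hkey, Finset.card_insert_of_notMem hnotmem]

end GaussCode

end Aux

/-- The sum of `t^(d (u c))` over all crossings `c` equals `t ⬝ X_D(t)`. -/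
theorem sum_under_weights_eq_X_mul_warping_crossing_poly
    (n : ℕ) (hn : 1 ≤ n) (D : GaussCode n) :
    ∑ c : Fin n, (Polynomial.X : Polynomial ℤ) ^ D.d (D.u c)
      = Polynomial.X * D.Xpoly := by
  haveI : NeZero (2 * n) := ⟨by omega⟩
  set A : Polynomial ℤ := ∑ c : Fin n, Polynomial.X ^ D.d (D.o c) with hA
  set B : Polynomial ℤ := ∑ c : Fin n, Polynomial.X ^ D.d (D.u c) with hB
  set C : Polynomial ℤ := ∑ c : Fin n, Polynomial.X ^ D.d (D.u c + 1) with hC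
  have hshift : ∑ e : ZMod (2 * n), (Polynomial.X : Polynomial ℤ) ^ D.d (e + 1)
      = ∑ e : ZMod (2 * n), (Polynomial.X : Polynomial ℤ) ^ D.d e := by
    exact Fintype.sum_bijective (· + 1) (Equiv.addRight (1 : ZMod (2 * n))).bijective _ _
      (fun x => rfl)
  have h1 : ∑ e : ZMod (2 * n), (Polynomial.X : Polynomial ℤ) ^ D.d e = A + B :=
    D.sum_split hn _
  have h2 : ∑ e : ZMod (2 * n), (Polynomial.X : Polynomial ℤ) ^ D.d (e + 1)
      = Polynomial.X * A + C := by
    rw [D.sum_split hn (fun e => (Polynomial.X : Polynomial ℤ) ^ D.d (e + 1))]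
    congr 1
    rw [hA, Finset.mul_sum]
    exact Finset.sum_congr rfl fun c _ => by rw [D.d_o_succ hn c, pow_succ, mul_comm]
  have hAB : A + B = Polynomial.X * A + C := by rw [← h1, ← h2, hshift]
  have hXC : Polynomial.X * C = B := by
    rw [hC, hB, Finset.mul_sum]
    exact Finset.sum_congr rfl fun c _ => by
      rw [← D.d_u_succ hn c, pow_succ, mul_comm]
  have hne : (Polynomial.X - 1 : Polynomial ℤ) ≠ 0 := by
    have := Polynomial.X_sub_C_ne_zero (1 : ℤ)
    simpa using this
  have key : (Polynomial.X - 1) * B = (Polynomial.X - 1) * (Polynomial.X * A) := by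
    linear_combination Polynomial.X * hAB + hXC
  have := mul_left_cancel₀ hne key
  rw [GaussCode.Xpoly]
  exact this
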